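/- Fix d ≥ 2. Let 0 < p < 1. For each n, let B_n be the set of self-avoiding nearest-neighbour paths in ℤ^d from the origin to the point n·u, where u ∈ ℚ^d with ‖u‖₁ = 1 and u^{[1]} = −(1−δ) with |δ| < ε, whose lengths lie in [n, (1+ε)n]. For a path γ of length k with exactly w steps in direction −e₁, the number of such paths is at most C(k, k−w)·(2d−1)^{k−w}, every path in B_n has w ∈ [n(1−δ), k], and consequently |B_n| ≤ (1+nε)·(1+n(ε+δ))·C(⌊(1+ε)n⌋, ⌈n(ε+δ)⌉)·(2d−1)^{n(ε+δ)}, provided 1 − 2δ − ε > 0. -/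

import Mathlib

open Finset

/-- The unit step of `ℤ^d` encoded by a coordinate and a sign
(`true` = positive direction). -/
def stepVec (d : ℕ) (s : Fin d × Bool) : Fin d → ℤ :=
  fun j => if j = s.1 then (if s.2 then 1 else -1) else 0

/-- Position after `m` steps of the step sequence `s`. -/
def posAt (d L : ℕ) (s : Fin L → Fin d × Bool) (m : ℕ) : Fin d → ℤ :=
  ∑ i ∈ Finset.range m, if h : i < L then stepVec d (s ⟨i, h⟩) else 0

open Classical in
/-- The set of self-avoiding nearest-neighbour paths of length `L` from the
origin to `z` with exactly `w` steps in direction `-e₁`, encoded as step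
sequences. -/
noncomputable def pathSet (d : ℕ) [NeZero d] (z : Fin d → ℤ) (L w : ℕ) :
    Finset (Fin L → Fin d × Bool) :=
  Finset.univ.filter (fun s =>
    Function.Injective (fun m : Fin (L + 1) => posAt d L s (m : ℕ)) ∧
    posAt d L s L = z ∧
    (Finset.univ.filter (fun i : Fin L => s i = (0, false))).card = w)

lemma choose_le_choose_right {n r s : ℕ} (hrs : r ≤ s) (h : r + s ≤ n) :
    n.choose r ≤ n.choose s := by
  have key : ∀ r s : ℕ, r ≤ s → 2 * s ≤ n → n.choose r ≤ n.choose s := by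
    intro r s
    induction s with
    | zero => intro hrs _; obtain rfl := Nat.le_zero.mp hrs; exact le_rfl
    | succ t ih =>
      intro hrs h2
      rcases Nat.eq_or_lt_of_le hrs with rfl | hlt
      · exact le_rfl
      · exact (ih (by omega) (by omega)).trans
          (Nat.choose_le_succ_of_lt_half_left (by omega))
  rcases le_or_gt (2 * s) n with h2 | h2
  · exact key r s hrs h2
  · have hsn : s ≤ n := by omega
    rw [← Nat.choose_symm hsn]
    exact key r (n - s) (by omega) (by omega)

def enc (d k : ℕ) [NeZero d] (s : Fin k → Fin d × Bool) :
    Σ T : Finset (Fin k), ({i // i ∈ T} → {x : Fin d × Bool // x ≠ ((0 : Fin d), false)}) :=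
  ⟨Finset.univ.filter (fun i => s i ≠ ((0 : Fin d), false)),
   fun i => ⟨s i.1, (Finset.mem_filter.mp i.2).2⟩⟩

def dec (d k : ℕ) [NeZero d]
    (p : Σ T : Finset (Fin k), ({i // i ∈ T} → {x : Fin d × Bool // x ≠ ((0 : Fin d), false)})) :
    Fin k → Fin d × Bool :=
  fun i => if h : i ∈ p.1 then (p.2 ⟨i, h⟩).1 else ((0 : Fin d), false)

lemma dec_enc (d k : ℕ) [NeZero d] (s : Fin k → Fin d × Bool) : dec d k (enc d k s) = s := by
  funext i
  by_cases h : s i = ((0 : Fin d), false)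
  · simp [dec, enc, h]
  · simp [dec, enc, h]

lemma card_pathSet_le (d : ℕ) [NeZero d] (z : Fin d → ℤ) (k w : ℕ) :
    (pathSet d z k w).card ≤ k.choose (k - w) * (2 * d - 1) ^ (k - w) := by
  classical
  have hcardX : Fintype.card {x : Fin d × Bool // x ≠ ((0 : Fin d), false)} = 2 * d - 1 := by
    rw [Fintype.card_subtype_compl, Fintype.card_subtype_eq, Fintype.card_prod,
      Fintype.card_fin, Fintype.card_bool, Nat.mul_comm]
  set S := (Finset.univ.powersetCard (k - w)).sigma
      (fun T : Finset (Fin k) =>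
        (Finset.univ : Finset ({i // i ∈ T} → {x : Fin d × Bool // x ≠ ((0 : Fin d), false)})))
      with hSdef
  have hS : S.card = k.choose (k - w) * (2 * d - 1) ^ (k - w) := by
    rw [hSdef, Finset.card_sigma]
    rw [Finset.sum_congr rfl (fun T hT => ?_), Finset.sum_const,
      Finset.card_powersetCard, Finset.card_univ, Fintype.card_fin, smul_eq_mul]
    rw [Finset.card_univ, Fintype.card_fun, Fintype.card_coe,
      (Finset.mem_powersetCard.mp hT).2, hcardX]
  rw [← hS]
  apply Finset.card_le_card_of_injOn (enc d k) ?_ ?_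
  · intro s hs
    simp only [pathSet, Finset.mem_coe, Finset.mem_filter, Finset.mem_univ, true_and] at hs
    obtain ⟨-, -, hw⟩ := hs
    rw [Finset.mem_coe, hSdef, Finset.mem_sigma]
    refine ⟨?_, Finset.mem_univ _⟩
    rw [Finset.mem_powersetCard]
    refine ⟨Finset.subset_univ _, ?_⟩
    have hsplit := Finset.card_filter_add_card_filter_not
      (s := (Finset.univ : Finset (Fin k))) (p := fun i => s i = ((0 : Fin d), false))
    simp only [Finset.card_univ, Fintype.card_fin] at hsplit
    simp only [enc, ne_eq]
    omega
  · intro s₁ _ s₂ _ h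
    have := congrArg (dec d k) h
    rwa [dec_enc, dec_enc] at this

lemma stepVec_zero (d : ℕ) [NeZero d] (x : Fin d × Bool) :
    stepVec d x 0 = (if x = ((0 : Fin d), true) then (1 : ℤ) else 0)
      - (if x = ((0 : Fin d), false) then (1 : ℤ) else 0) := by
  obtain ⟨a, b⟩ := x
  simp only [stepVec, Prod.mk.injEq]
  by_cases h : (0 : Fin d) = a
  · subst h; cases b <;> simp
  · have h' : ¬ a = (0 : Fin d) := fun hh => h hh.symm
    cases b <;> simp [h, h']

lemma posAt_last (d L : ℕ) (s : Fin L → Fin d × Bool) :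
    posAt d L s L = ∑ i : Fin L, stepVec d (s i) := by
  unfold posAt
  rw [← Fin.sum_univ_eq_sum_range (fun i => if h : i < L then stepVec d (s ⟨i, h⟩) else 0) L]
  exact Finset.sum_congr rfl (fun i _ => by simp)

lemma posAt_zero_coord (d L : ℕ) [NeZero d] (s : Fin L → Fin d × Bool) :
    posAt d L s L 0 =
      ((Finset.univ.filter (fun i : Fin L => s i = ((0 : Fin d), true))).card : ℤ)
      - ((Finset.univ.filter (fun i : Fin L => s i = ((0 : Fin d), false))).card : ℤ) := by
  classical
  rw [posAt_last, Finset.sum_apply]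
  rw [Finset.sum_congr rfl (fun i _ => stepVec_zero d (s i)), Finset.sum_sub_distrib,
    Finset.sum_boole, Finset.sum_boole]

theorem path_counting (d : ℕ) (hd : 2 ≤ d) [NeZero d] (n : ℕ) (hn : 1 ≤ n)
    (ε δ : ℝ) (hε : 0 < ε) (hδ : |δ| < ε) (hcond : 0 < 1 - 2 * δ - ε)
    (z : Fin d → ℤ) (hz0 : ((z 0 : ℤ) : ℝ) = -(1 - δ) * n)
    (hz1 : ∑ i, (z i).natAbs = n) :
    (∀ k w : ℕ, ((pathSet d z k w).card : ℝ) ≤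
        (k.choose (k - w) : ℝ) * (2 * (d : ℝ) - 1) ^ (k - w)) ∧
    (∀ k w : ℕ, n ≤ k → (k : ℝ) ≤ (1 + ε) * n → (pathSet d z k w).Nonempty →
        (n : ℝ) * (1 - δ) ≤ (w : ℝ) ∧ w ≤ k) ∧
    (∑ k ∈ Finset.Icc n ⌊(1 + ε) * (n : ℝ)⌋₊, ∑ w ∈ Finset.range (k + 1),
        ((pathSet d z k w).card : ℝ)) ≤
      (1 + (n : ℝ) * ε) * (1 + (n : ℝ) * (ε + δ)) *
        (Nat.choose ⌊(1 + ε) * (n : ℝ)⌋₊ ⌈(n : ℝ) * (ε + δ)⌉₊ : ℝ) *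
        (2 * (d : ℝ) - 1) ^ ((n : ℝ) * (ε + δ)) := by
  classical
  have hd1 : (2 : ℝ) ≤ (d : ℝ) := by exact_mod_cast hd
  have hnr : (1 : ℝ) ≤ (n : ℝ) := by exact_mod_cast hn
  have habs := abs_lt.mp hδ
  have hεδpos : 0 < ε + δ := by linarith
  have h1δ : 0 < 1 - δ := by linarith
  have hbase : (1 : ℝ) ≤ 2 * (d : ℝ) - 1 := by linarith
  -- Part 1
  have part1 : ∀ k w : ℕ, ((pathSet d z k w).card : ℝ) ≤
      (k.choose (k - w) : ℝ) * (2 * (d : ℝ) - 1) ^ (k - w) := by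
    intro k w
    have h := card_pathSet_le d z k w
    have hc : ((k.choose (k - w) * (2 * d - 1) ^ (k - w) : ℕ) : ℝ)
        = (k.choose (k - w) : ℝ) * (2 * (d : ℝ) - 1) ^ (k - w) := by
      have h1 : ((2 * d - 1 : ℕ) : ℝ) = 2 * (d : ℝ) - 1 := by
        rw [Nat.cast_sub (by omega)]; push_cast; ring
      rw [Nat.cast_mul, Nat.cast_pow, h1]
    calc ((pathSet d z k w).card : ℝ)
        ≤ ((k.choose (k - w) * (2 * d - 1) ^ (k - w) : ℕ) : ℝ) := Nat.cast_le.mpr h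
      _ = _ := hc
  -- Part 2
  have part2 : ∀ k w : ℕ, n ≤ k → (k : ℝ) ≤ (1 + ε) * n → (pathSet d z k w).Nonempty →
      (n : ℝ) * (1 - δ) ≤ (w : ℝ) ∧ w ≤ k := by
    intro k w hk hk2 ⟨s, hs⟩
    simp only [pathSet, Finset.mem_filter, Finset.mem_univ, true_and] at hs
    obtain ⟨-, hend, hw⟩ := hs
    have hwk : w ≤ k := by
      rw [← hw]
      simpa using Finset.card_filter_le (Finset.univ : Finset (Fin k))
        (fun i => s i = ((0 : Fin d), false))
    refine ⟨?_, hwk⟩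
    have hz := congrArg (fun f => f 0) hend
    rw [posAt_zero_coord] at hz
    rw [hw] at hz
    have hzr : ((Finset.univ.filter (fun i : Fin k => s i = ((0 : Fin d), true))).card : ℝ)
        - (w : ℝ) = ((z 0 : ℤ) : ℝ) := by exact_mod_cast congrArg (fun t : ℤ => (t : ℝ)) hz
    have hP : (0 : ℝ) ≤
        ((Finset.univ.filter (fun i : Fin k => s i = ((0 : Fin d), true))).card : ℝ) :=
      Nat.cast_nonneg _
    rw [hz0] at hzr
    nlinarith
  refine ⟨part1, part2, ?_⟩
  -- Part 3
  set K := ⌊(1 + ε) * (n : ℝ)⌋₊ with hKdef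
  set W := ⌈(n : ℝ) * (ε + δ)⌉₊ with hWdef
  set c := ⌈(n : ℝ) * (1 - δ)⌉₊ with hcdef
  have hKle : (K : ℝ) ≤ (1 + ε) * n := Nat.floor_le (by nlinarith)
  have hnK : n ≤ K := Nat.le_floor (by nlinarith)
  have hWc : W ≤ c := Nat.ceil_le_ceil (by nlinarith)
  set M := (Nat.choose K W : ℝ) * (2 * (d : ℝ) - 1) ^ ((n : ℝ) * (ε + δ)) with hMdef
  have hMnn : 0 ≤ M := mul_nonneg (Nat.cast_nonneg _) (Real.rpow_nonneg (by linarith) _)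
  have hAnn : (0 : ℝ) ≤ 1 + (n : ℝ) * (ε + δ) := by nlinarith
  have inner : ∀ k ∈ Finset.Icc n K,
      ∑ w ∈ Finset.range (k + 1), ((pathSet d z k w).card : ℝ)
        ≤ (1 + (n : ℝ) * (ε + δ)) * M := by
    intro k hk
    obtain ⟨hk1, hk2⟩ := Finset.mem_Icc.mp hk
    have hkr : (k : ℝ) ≤ (1 + ε) * n := le_trans (Nat.cast_le.mpr hk2) hKle
    have step : ∀ w ∈ Finset.range (k + 1),
        ((pathSet d z k w).card : ℝ) ≤ if c ≤ w then M else 0 := by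
      intro w _
      rcases Nat.eq_zero_or_pos (pathSet d z k w).card with h0 | hpos
      · rw [h0]
        simp only [Nat.cast_zero]
        split_ifs
        · exact hMnn
        · exact le_rfl
      · have hne : (pathSet d z k w).Nonempty := Finset.card_pos.mp hpos
        obtain ⟨hwlb, hwk⟩ := part2 k w hk1 hkr hne
        have hcw : c ≤ w := Nat.ceil_le.mpr (by linarith)
        rw [if_pos hcw]
        have hjr : ((k - w : ℕ) : ℝ) ≤ (n : ℝ) * (ε + δ) := by
          rw [Nat.cast_sub hwk]; linarith
        have hjW : k - w ≤ W := by
          exact_mod_cast Nat.cast_le.mp (hjr.trans (Nat.le_ceil _))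
        have hjK : (k - w) + W ≤ K := by omega
        have hchoose : (k.choose (k - w) : ℝ) ≤ (Nat.choose K W : ℝ) :=
          Nat.cast_le.mpr ((Nat.choose_le_choose _ hk2).trans
            (choose_le_choose_right hjW hjK))
        have hpow : (2 * (d : ℝ) - 1) ^ (k - w)
            ≤ (2 * (d : ℝ) - 1) ^ ((n : ℝ) * (ε + δ)) := by
          rw [← Real.rpow_natCast]
          exact Real.rpow_le_rpow_of_exponent_le hbase hjr
        calc ((pathSet d z k w).card : ℝ)
            ≤ (k.choose (k - w) : ℝ) * (2 * (d : ℝ) - 1) ^ (k - w) := part1 k w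
          _ ≤ M := mul_le_mul hchoose hpow (by positivity) (Nat.cast_nonneg _)
    have hcr : (n : ℝ) * (1 - δ) ≤ (c : ℝ) := Nat.le_ceil _
    calc ∑ w ∈ Finset.range (k + 1), ((pathSet d z k w).card : ℝ)
        ≤ ∑ w ∈ Finset.range (k + 1), (if c ≤ w then M else 0) := Finset.sum_le_sum step
      _ = (((Finset.range (k + 1)).filter (fun w => c ≤ w)).card : ℝ) * M := by
          rw [← Finset.sum_filter, Finset.sum_const, nsmul_eq_mul]
      _ ≤ (1 + (n : ℝ) * (ε + δ)) * M := by
          apply mul_le_mul_of_nonneg_right ?_ hMnn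
          have hsub : (Finset.range (k + 1)).filter (fun w => c ≤ w) ⊆ Finset.Icc c k := by
            intro x hx
            simp only [Finset.mem_filter, Finset.mem_range] at hx
            rw [Finset.mem_Icc]
            omega
          have hcard : ((Finset.range (k + 1)).filter (fun w => c ≤ w)).card ≤ k + 1 - c := by
            simpa [Nat.card_Icc] using Finset.card_le_card hsub
          rcases le_or_gt c (k + 1) with hck | hck
          · calc (((Finset.range (k + 1)).filter (fun w => c ≤ w)).card : ℝ)
                ≤ ((k + 1 - c : ℕ) : ℝ) := Nat.cast_le.mpr hcard
              _ = (k : ℝ) + 1 - (c : ℝ) := by rw [Nat.cast_sub hck]; push_cast; ring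
              _ ≤ 1 + (n : ℝ) * (ε + δ) := by linarith
          · have h0 : ((Finset.range (k + 1)).filter (fun w => c ≤ w)).card = 0 := by omega
            rw [h0]
            simpa using hAnn
  calc ∑ k ∈ Finset.Icc n K, ∑ w ∈ Finset.range (k + 1), ((pathSet d z k w).card : ℝ)
      ≤ ∑ k ∈ Finset.Icc n K, (1 + (n : ℝ) * (ε + δ)) * M := Finset.sum_le_sum inner
    _ = ((Finset.Icc n K).card : ℝ) * ((1 + (n : ℝ) * (ε + δ)) * M) := by
        rw [Finset.sum_const, nsmul_eq_mul]
    _ ≤ (1 + (n : ℝ) * ε) * ((1 + (n : ℝ) * (ε + δ)) * M) := by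
        apply mul_le_mul_of_nonneg_right ?_ (mul_nonneg hAnn hMnn)
        rw [Nat.card_Icc]
        have hcast : ((K + 1 - n : ℕ) : ℝ) = (K : ℝ) + 1 - (n : ℝ) := by
          rw [Nat.cast_sub (by omega)]; push_cast; ring
        rw [hcast]
        linarith
    _ = (1 + (n : ℝ) * ε) * (1 + (n : ℝ) * (ε + δ)) *
        (Nat.choose K W : ℝ) * (2 * (d : ℝ) - 1) ^ ((n : ℝ) * (ε + δ)) := by
        rw [hMdef]; ring
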